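/- Let α ∈ (0,1), let W ∈ ℝ^{k × k}, let b ∈ ℝ^k, and let z ∈ Δ_k. Then z is the unique minimizer over Δ_k of w ↦ P_α((1−α)z + α(Wz + b), w) if and only if z = softmax(Wz + b). In other words, the fixed points of the damped prox iteration coincide exactly with the mean-field fixed points. -/
import Mathlib


open Matrix

/-- The probability simplex Δ_k in ℝ^k. -/
def simplex (k : ℕ) : Set (Fin k → ℝ) :=
  {z | (∀ i, 0 ≤ z i) ∧ ∑ i, z i = 1}

/-- The softmax function on ℝ^k. -/
noncomputable def softmax {k : ℕ} (x : Fin k → ℝ) : Fin k → ℝ :=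
  fun i => Real.exp (x i) / ∑ j, Real.exp (x j)

/-- The prox objective `P_α(x, z) = (1/2)‖x − z‖₂² + α Σ_i z_i log z_i − (α/2)‖z‖₂²`.
(Note `Real.log 0 = 0`, giving the convention `0 · log 0 = 0`.) -/
noncomputable def proxObj {k : ℕ} (α : ℝ) (x z : Fin k → ℝ) : ℝ :=
  (1 / 2) * ∑ i, (x i - z i) ^ 2 + α * ∑ i, z i * Real.log (z i)
    - (α / 2) * ∑ i, (z i) ^ 2

lemma gibbs_le (a b : ℝ) (ha : 0 ≤ a) (hb : 0 < b) :
    a - b ≤ a * Real.log a - a * Real.log b := by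
  rcases eq_or_lt_of_le ha with h | h
  · simp [← h]; linarith
  · have h1 := Real.log_le_sub_one_of_pos (div_pos hb h)
    rw [Real.log_div hb.ne' h.ne'] at h1
    have h2 : a * (b / a) = b := by field_simp
    nlinarith [mul_le_mul_of_nonneg_left h1 h.le]

lemma gibbs_lt (a b : ℝ) (ha : 0 ≤ a) (hb : 0 < b) (hab : a ≠ b) :
    a - b < a * Real.log a - a * Real.log b := by
  rcases eq_or_lt_of_le ha with h | h
  · simp [← h]; linarith
  · have hne : b / a ≠ 1 := by
      intro hc
      exact hab ((div_eq_one_iff_eq h.ne').mp hc).symm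
    have h1 := Real.log_lt_sub_one_of_pos (div_pos hb h) hne
    rw [Real.log_div hb.ne' h.ne'] at h1
    have h2 : a * (b / a) = b := by field_simp
    nlinarith [mul_lt_mul_of_pos_left h1 h]

lemma expsum_pos {k : ℕ} (hk : 0 < k) (x : Fin k → ℝ) :
    0 < ∑ j, Real.exp (x j) :=
  Finset.sum_pos (fun j _ => Real.exp_pos _)
    (by simp [Finset.univ_nonempty_iff, Fin.pos_iff_nonempty.mp hk])

lemma softmax_pos {k : ℕ} (hk : 0 < k) (x : Fin k → ℝ) (i : Fin k) :
    0 < softmax x i := div_pos (Real.exp_pos _) (expsum_pos hk x)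

lemma softmax_sum {k : ℕ} (hk : 0 < k) (x : Fin k → ℝ) :
    ∑ i, softmax x i = 1 := by
  simp only [softmax, ← Finset.sum_div]
  exact div_self (expsum_pos hk x).ne'

lemma log_softmax {k : ℕ} (hk : 0 < k) (x : Fin k → ℝ) (i : Fin k) :
    Real.log (softmax x i) = x i - Real.log (∑ j, Real.exp (x j)) := by
  rw [softmax, Real.log_div (Real.exp_pos _).ne' (expsum_pos hk x).ne', Real.log_exp]

lemma prox_diff {k : ℕ} (α : ℝ) (x w z : Fin k → ℝ) :
    proxObj α x w - proxObj α x z =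
      ∑ i, ((1 - α) / 2 * (w i ^ 2 - z i ^ 2) - x i * (w i - z i)
        + α * (w i * Real.log (w i) - z i * Real.log (z i))) := by
  simp only [proxObj, Finset.mul_sum, ← Finset.sum_sub_distrib, ← Finset.sum_add_distrib]
  exact Finset.sum_congr rfl fun i _ => by ring

theorem stmt15 {k : ℕ} (hk : 0 < k) (α : ℝ) (hα : α ∈ Set.Ioo (0 : ℝ) 1)
    (W : Matrix (Fin k) (Fin k) ℝ) (b : Fin k → ℝ)
    (z : Fin k → ℝ) (hz : z ∈ simplex k) :
    (∀ w ∈ simplex k, w ≠ z →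
        proxObj α (fun i => (1 - α) * z i + α * (W.mulVec z i + b i)) z <
          proxObj α (fun i => (1 - α) * z i + α * (W.mulVec z i + b i)) w) ↔
      z = softmax (fun i => W.mulVec z i + b i) := by
  obtain ⟨hα0, hα1⟩ := hα
  obtain ⟨hz0, hz1⟩ := hz
  set u : Fin k → ℝ := fun i => W.mulVec z i + b i with hu_def
  set L : ℝ := Real.log (∑ j, Real.exp (u j)) with hL_def
  set v : Fin k → ℝ := softmax u with hv_def
  have hvpos : ∀ i, 0 < v i := fun i => softmax_pos hk u i
  have hvsum : ∑ i, v i = 1 := softmax_sum hk u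
  have hlogv : ∀ i, Real.log (v i) = u i - L := fun i => log_softmax hk u i
  constructor
  · -- unique minimizer → fixed point
    intro hmin
    by_contra hne
    have hne' : ∃ i, z i ≠ v i := by
      by_contra hc; push_neg at hc; exact hne (funext hc)
    obtain ⟨i0, hi0⟩ := hne'
    set K : ℝ := ∑ i, (z i * Real.log (z i) - z i * Real.log (v i)) with hK_def
    set B : ℝ := ∑ i, (v i - z i) ^ 2 with hB_def
    have hKpos : 0 < K := by
      have h1 : ∑ i, (z i - v i) < K :=
        Finset.sum_lt_sum (fun i _ => gibbs_le (z i) (v i) (hz0 i) (hvpos i))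
          ⟨i0, Finset.mem_univ _, gibbs_lt (z i0) (v i0) (hz0 i0) (hvpos i0) hi0⟩
      have h2 : ∑ i, (z i - v i) = 0 := by
        rw [Finset.sum_sub_distrib, hz1, hvsum]; ring
      linarith
    have hBpos : 0 < B := by
      refine Finset.sum_pos' (fun i _ => sq_nonneg _) ⟨i0, Finset.mem_univ _, ?_⟩
      have := sub_ne_zero.mpr (Ne.symm hi0)
      positivity
    set t : ℝ := min 1 (α * K / ((1 - α) * B)) with ht_def
    have ht0 : 0 < t :=
      lt_min one_pos (div_pos (mul_pos hα0 hKpos) (mul_pos (by linarith) hBpos))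
    have ht1 : t ≤ 1 := min_le_left _ _
    have htle : t * ((1 - α) * B) ≤ α * K :=
      (le_div_iff₀ (mul_pos (by linarith) hBpos)).mp (min_le_right _ _)
    set w : Fin k → ℝ := fun i => z i + t * (v i - z i) with hw_def
    have hwmem : w ∈ simplex k := by
      constructor
      · intro i
        have h1 := hz0 i
        have h2 := (hvpos i).le
        simp only [hw_def]
        nlinarith
      · simp only [hw_def]
        rw [Finset.sum_add_distrib, ← Finset.mul_sum, Finset.sum_sub_distrib, hz1, hvsum]
        ring
    have hwne : w ≠ z := by
      intro hc
      have := congrFun hc i0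
      simp only [hw_def] at this
      have h2 : t * (v i0 - z i0) = 0 := by linarith
      rcases mul_eq_zero.mp h2 with h | h
      · exact ht0.ne' h
      · exact hi0 (sub_eq_zero.mp h).symm
    have hlt := hmin w hwmem hwne
    -- now derive the contradicting upper bound
    have hpd := prox_diff α (fun i => (1 - α) * z i + α * (W.mulVec z i + b i)) w z
    have hbound : ∀ i, (1 - α) / 2 * (w i ^ 2 - z i ^ 2)
          - ((fun i => (1 - α) * z i + α * (W.mulVec z i + b i)) i) * (w i - z i)
          + α * (w i * Real.log (w i) - z i * Real.log (z i)) ≤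
        -(t * α) * (z i * Real.log (z i) - z i * Real.log (v i))
          + (-(t * α * L)) * (v i - z i) + t ^ 2 * (1 - α) / 2 * (v i - z i) ^ 2 := by
      intro i
      have hui : u i = Real.log (v i) + L := by rw [hlogv i]; ring
      have hwi : w i = (1 - t) * z i + t * v i := by simp only [hw_def]; ring
      have hconv : w i * Real.log (w i) ≤
          (1 - t) * (z i * Real.log (z i)) + t * (v i * Real.log (v i)) := by
        have := Real.convexOn_mul_log.2 (Set.mem_Ici.mpr (hz0 i))
          (Set.mem_Ici.mpr (hvpos i).le) (show (0:ℝ) ≤ 1 - t by linarith) ht0.le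
          (show (1 - t) + t = 1 by ring)
        simpa [smul_eq_mul, hwi] using this
      have hkey : (1 - α) / 2 * (w i ^ 2 - z i ^ 2)
            - ((1 - α) * z i + α * (W.mulVec z i + b i)) * (w i - z i)
            + α * (w i * Real.log (w i) - z i * Real.log (z i)) =
          -(t * α) * (z i * Real.log (z i) - z i * Real.log (v i))
            + (-(t * α * L)) * (v i - z i) + t ^ 2 * (1 - α) / 2 * (v i - z i) ^ 2
            + α * (w i * Real.log (w i)
              - ((1 - t) * (z i * Real.log (z i)) + t * (v i * Real.log (v i)))) := by
        have hwz : W.mulVec z i + b i = Real.log (v i) + L := hui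
        rw [hwz, hwi]; ring
      have h5 : α * (w i * Real.log (w i)
          - ((1 - t) * (z i * Real.log (z i)) + t * (v i * Real.log (v i)))) ≤ 0 := by
        have := mul_le_mul_of_nonneg_left (sub_nonpos.mpr hconv) hα0.le
        simpa using this
      simp only []
      rw [hkey]
      exact (add_le_iff_nonpos_right _).mpr h5
    have hsum : proxObj α (fun i => (1 - α) * z i + α * (W.mulVec z i + b i)) w
          - proxObj α (fun i => (1 - α) * z i + α * (W.mulVec z i + b i)) z ≤
        -(t * α) * K + t ^ 2 * (1 - α) / 2 * B := by
      rw [hpd]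
      have h1 : ∑ i, (-(t * α) * (z i * Real.log (z i) - z i * Real.log (v i))
            + (-(t * α * L)) * (v i - z i) + t ^ 2 * (1 - α) / 2 * (v i - z i) ^ 2) =
          -(t * α) * K + (-(t * α * L)) * ∑ i, (v i - z i)
            + t ^ 2 * (1 - α) / 2 * B := by
        rw [hK_def, hB_def, Finset.mul_sum, Finset.mul_sum, Finset.mul_sum,
          ← Finset.sum_add_distrib, ← Finset.sum_add_distrib]
      have h2 : ∑ i, (v i - z i) = 0 := by
        rw [Finset.sum_sub_distrib, hz1, hvsum]; ring
      calc _ ≤ ∑ i, (-(t * α) * (z i * Real.log (z i) - z i * Real.log (v i))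
            + (-(t * α * L)) * (v i - z i) + t ^ 2 * (1 - α) / 2 * (v i - z i) ^ 2) :=
          Finset.sum_le_sum (fun i _ => hbound i)
        _ = -(t * α) * K + t ^ 2 * (1 - α) / 2 * B := by rw [h1, h2]; ring
    have hneg : -(t * α) * K + t ^ 2 * (1 - α) / 2 * B < 0 := by
      nlinarith [mul_le_mul_of_nonneg_left htle ht0.le,
        mul_pos ht0 (mul_pos hα0 hKpos)]
    linarith
  · -- fixed point → unique minimizer
    intro hsm w hw hwz
    obtain ⟨hw0, hw1⟩ := hw
    have hzpos : ∀ i, 0 < z i := fun i => hsm ▸ hvpos i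
    have hlogz : ∀ i, Real.log (z i) = u i - L := fun i => by rw [hsm]; exact hlogv i
    rw [← sub_pos, prox_diff]
    have hne' : ∃ i, w i ≠ z i := by
      by_contra hc; push_neg at hc; exact hwz (funext hc)
    obtain ⟨i0, hi0⟩ := hne'
    have hB : 0 < ∑ i, (w i - z i) ^ 2 := by
      refine Finset.sum_pos' (fun i _ => sq_nonneg _) ⟨i0, Finset.mem_univ _, ?_⟩
      have := sub_ne_zero.mpr hi0
      positivity
    have hbound : ∀ i, (1 - α) / 2 * (w i - z i) ^ 2 + (α - α * L) * (w i - z i) ≤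
        (1 - α) / 2 * (w i ^ 2 - z i ^ 2)
          - ((fun i => (1 - α) * z i + α * (W.mulVec z i + b i)) i) * (w i - z i)
          + α * (w i * Real.log (w i) - z i * Real.log (z i)) := by
      intro i
      have hui : W.mulVec z i + b i = Real.log (z i) + L := by rw [hlogz i]; ring
      have hg := gibbs_le (w i) (z i) (hw0 i) (hzpos i)
      have hkey : (1 - α) / 2 * (w i ^ 2 - z i ^ 2)
            - ((1 - α) * z i + α * (W.mulVec z i + b i)) * (w i - z i)
            + α * (w i * Real.log (w i) - z i * Real.log (z i)) =
          (1 - α) / 2 * (w i - z i) ^ 2 + (α - α * L) * (w i - z i)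
            + α * (w i * Real.log (w i) - w i * Real.log (z i) - (w i - z i)) := by
        rw [hui]; ring
      have h5 : (0:ℝ) ≤ α * (w i * Real.log (w i) - w i * Real.log (z i) - (w i - z i)) :=
        mul_nonneg hα0.le (by linarith)
      simp only []
      rw [hkey]
      linarith
    have h2 : ∑ i, (w i - z i) = 0 := by
      rw [Finset.sum_sub_distrib, hw1, hz1]; ring
    have hsum : ∑ i, ((1 - α) / 2 * (w i - z i) ^ 2 + (α - α * L) * (w i - z i)) =
        (1 - α) / 2 * ∑ i, (w i - z i) ^ 2 + (α - α * L) * ∑ i, (w i - z i) := by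
      rw [Finset.mul_sum, Finset.mul_sum, ← Finset.sum_add_distrib]
    calc (0:ℝ) < (1 - α) / 2 * ∑ i, (w i - z i) ^ 2 + (α - α * L) * ∑ i, (w i - z i) := by
          rw [h2]; have : 0 < (1 - α) / 2 := by linarith
          nlinarith
      _ = ∑ i, ((1 - α) / 2 * (w i - z i) ^ 2 + (α - α * L) * (w i - z i)) := hsum.symm
      _ ≤ _ := Finset.sum_le_sum (fun i _ => hbound i)
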